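/- For all integers p, q with q ≥ p ≥ 2 and (p ≥ 3 or q ≥ 4), and all n ≥ p + q + 2, the maximum number of edges in an n-vertex outerplanar graph containing no subgraph isomorphic to the double star S_{p,q} equals 2n − 3. -/

import Mathlib

open SimpleGraph Finset

/-- `G` contains a copy of the double star `S_{p,q}`: adjacent centers `x, y`,
with `p` leaves attached to `x` and `q` leaves attached to `y`, all distinct. -/
def ContainsDoubleStar {V : Type*} (G : SimpleGraph V) (p q : ℕ) : Prop :=
  ∃ (x y : V) (X Y : Finset V), G.Adj x y ∧ X.card = p ∧ Y.card = q ∧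
    Disjoint X Y ∧ y ∉ X ∧ x ∉ Y ∧ (∀ v ∈ X, G.Adj x v) ∧ (∀ v ∈ Y, G.Adj y v)

/-- A graph is outerplanar iff it admits a one-page book embedding: a linear
ordering of the vertices such that no two edges cross. -/
def IsOuterplanar {V : Type*} (G : SimpleGraph V) : Prop :=
  ∃ σ : V → Fin (Nat.card V), Function.Bijective σ ∧
    ∀ a b c d : V, G.Adj a b → G.Adj c d → ¬ (σ a < σ c ∧ σ c < σ b ∧ σ b < σ d)

lemma noncross_bound : ∀ (k : ℕ), ∀ (lo hi : ℕ), hi - lo ≤ k → ∀ E : Finset (ℕ × ℕ),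
    (∀ e ∈ E, lo ≤ e.1 ∧ e.1 < e.2 ∧ e.2 ≤ hi) →
    (∀ e ∈ E, ∀ f ∈ E, ¬(e.1 < f.1 ∧ f.1 < e.2 ∧ e.2 < f.2)) →
    E.card ≤ 2 * (hi - lo) - 1 := by
  intro k
  induction k with
  | zero =>
    intro lo hi hk E hb _
    have : E = ∅ := by
      apply Finset.eq_empty_of_forall_notMem
      intro e he
      have := hb e he
      omega
    simp [this]
  | succ k ih =>
    intro lo hi hk E hb hnc
    by_cases hk' : hi - lo ≤ k
    · exact ih lo hi hk' E hb hnc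
    have hspan : hi - lo = k + 1 := by omega
    by_cases hsmall : hi - lo ≤ 1
    · -- E ⊆ {(lo,hi)}
      have : E ⊆ {(lo, hi)} := by
        intro e he
        have := hb e he
        simp only [Finset.mem_singleton]
        have : e.1 = lo ∧ e.2 = hi := by omega
        exact Prod.ext this.1 this.2
      calc E.card ≤ ({(lo,hi)} : Finset (ℕ×ℕ)).card := Finset.card_le_card this
        _ = 1 := Finset.card_singleton _
        _ ≤ 2 * (hi - lo) - 1 := by omega
    push_neg at hsmall
    set E₀ := E.erase (lo, hi) with hE₀
    have hE₀sub : E₀ ⊆ E := Finset.erase_subset _ _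
    have hcard : E.card ≤ E₀.card + 1 := by
      have : E ⊆ insert (lo, hi) E₀ := by
        intro e he
        by_cases h : e = (lo, hi)
        · simp [h]
        · exact Finset.mem_insert_of_mem (Finset.mem_erase.2 ⟨h, he⟩)
      calc E.card ≤ (insert (lo,hi) E₀).card := Finset.card_le_card this
        _ ≤ E₀.card + 1 := Finset.card_insert_le _ _
    set L := E₀.filter (fun e => e.1 + 2 ≤ e.2) with hL
    by_cases hLne : L.Nonempty
    · obtain ⟨m, hmL, hmax⟩ := Finset.exists_max_image L (fun e => e.2 - e.1) hLne
      have hmE₀ : m ∈ E₀ := (Finset.mem_filter.1 hmL).1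
      have hmlong : m.1 + 2 ≤ m.2 := (Finset.mem_filter.1 hmL).2
      have hmE : m ∈ E := hE₀sub hmE₀
      have hmb := hb m hmE
      set i := m.1
      set j := m.2
      have hne : ¬(i = lo ∧ j = hi) := by
        intro ⟨h1, h2⟩
        have := (Finset.mem_erase.1 hmE₀).1
        exact this (Prod.ext h1 h2)
      -- coverage
      have hcov : ∀ e ∈ E₀, (i ≤ e.1 ∧ e.2 ≤ j) ∨ e.2 ≤ i ∨ j ≤ e.1 := by
        intro e he
        have heE : e ∈ E := hE₀sub he
        have heb := hb e heE
        have hc1 := hnc e heE m hmE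
        have hc2 := hnc m hmE e heE
        by_cases hlong : e.1 + 2 ≤ e.2
        · have := hmax e (Finset.mem_filter.2 ⟨he, hlong⟩)
          omega
        · omega
      set f1 := E₀.filter (fun e => i ≤ e.1 ∧ e.2 ≤ j) with hf1
      set f2 := E₀.filter (fun e => e.2 ≤ i) with hf2
      set f3 := E₀.filter (fun e => j ≤ e.1) with hf3
      have hcover : E₀ ⊆ f1 ∪ f2 ∪ f3 := by
        intro e he
        rcases hcov e he with h | h | h
        · exact Finset.mem_union_left _ (Finset.mem_union_left _ (Finset.mem_filter.2 ⟨he, h⟩))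
        · exact Finset.mem_union_left _ (Finset.mem_union_right _ (Finset.mem_filter.2 ⟨he, h⟩))
        · exact Finset.mem_union_right _ (Finset.mem_filter.2 ⟨he, h⟩)
      have h1 : f1.card ≤ 2 * (j - i) - 1 := by
        apply ih i j (by omega)
        · intro e he
          have := Finset.mem_filter.1 he
          have := hb e (hE₀sub this.1)
          have := (Finset.mem_filter.1 he).2
          omega
        · intro e he f hf
          exact hnc e (hE₀sub (Finset.mem_filter.1 he).1) f (hE₀sub (Finset.mem_filter.1 hf).1)
      have h2 : f2.card ≤ 2 * (i - lo) - 1 := by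
        apply ih lo i (by omega)
        · intro e he
          have h' := Finset.mem_filter.1 he
          have := hb e (hE₀sub h'.1)
          omega
        · intro e he f hf
          exact hnc e (hE₀sub (Finset.mem_filter.1 he).1) f (hE₀sub (Finset.mem_filter.1 hf).1)
      have h3 : f3.card ≤ 2 * (hi - j) - 1 := by
        apply ih j hi (by omega)
        · intro e he
          have h' := Finset.mem_filter.1 he
          have := hb e (hE₀sub h'.1)
          omega
        · intro e he f hf
          exact hnc e (hE₀sub (Finset.mem_filter.1 he).1) f (hE₀sub (Finset.mem_filter.1 hf).1)
      have hsum : E₀.card ≤ f1.card + f2.card + f3.card := by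
        calc E₀.card ≤ (f1 ∪ f2 ∪ f3).card := Finset.card_le_card hcover
          _ ≤ (f1 ∪ f2).card + f3.card := Finset.card_union_le _ _
          _ ≤ f1.card + f2.card + f3.card := by
              have := Finset.card_union_le f1 f2
              omega
      omega
    · -- all short
      have hshort : ∀ e ∈ E₀, e.2 = e.1 + 1 := by
        intro e he
        have heb := hb e (hE₀sub he)
        by_contra h
        exact hLne ⟨e, Finset.mem_filter.2 ⟨he, by omega⟩⟩
      have : E₀.card ≤ hi - lo := by
        have : E₀.card ≤ (Finset.Ico lo hi).card := by
          apply Finset.card_le_card_of_injOn (fun e => e.1)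
          · intro e he
            have := hb e (hE₀sub he)
            have := hshort e he
            simp only [Finset.mem_coe, Finset.mem_Ico]
            omega
          · intro e he f hf h
            have h1 := hshort e he
            have h2 := hshort f hf
            simp only at h
            exact Prod.ext h (by omega)
          
        simpa using this
      omega

lemma outerplanar_card_le {n : ℕ} (G : SimpleGraph (Fin n)) (h : IsOuterplanar G) :
    Nat.card G.edgeSet ≤ 2 * n - 3 := by
  classical
  obtain ⟨σ, hbij, hnc⟩ := h
  have hcardV : Nat.card (Fin n) = n := by simp
  have hσlt : ∀ v : Fin n, (σ v).val < n := fun v => by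
    have := (σ v).isLt; omega
  set f : Sym2 (Fin n) → ℕ × ℕ := Sym2.lift ⟨fun a b =>
    (min (σ a).val (σ b).val, max (σ a).val (σ b).val), by
      intro a b; simp [min_comm, max_comm]⟩ with hf
  set E : Finset (ℕ × ℕ) := G.edgeFinset.image f with hE
  have hinj : Set.InjOn f G.edgeFinset := by
    intro e1 he1 e2 he2 heq
    induction e1 using Sym2.ind with
    | _ a b =>
      induction e2 using Sym2.ind with
      | _ c d =>
        simp only [hf, Sym2.lift_mk, Prod.mk.injEq] at heq
        have h1 : (σ a = σ c ∧ σ b = σ d) ∨ (σ a = σ d ∧ σ b = σ c) := by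
          have := heq.1; have := heq.2
          have hac : (σ a).val = (σ c).val ∧ (σ b).val = (σ d).val ∨
              (σ a).val = (σ d).val ∧ (σ b).val = (σ c).val := by omega
          rcases hac with ⟨h1, h2⟩ | ⟨h1, h2⟩
          · exact Or.inl ⟨Fin.ext h1, Fin.ext h2⟩
          · exact Or.inr ⟨Fin.ext h1, Fin.ext h2⟩
        rcases h1 with ⟨h1, h2⟩ | ⟨h1, h2⟩
        · rw [Sym2.eq_iff]; exact Or.inl ⟨hbij.1 h1, hbij.1 h2⟩
        · rw [Sym2.eq_iff]; exact Or.inr ⟨hbij.1 h1, hbij.1 h2⟩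
  have hcard : E.card = G.edgeFinset.card := Finset.card_image_of_injOn hinj
  have hbound : ∀ e ∈ E, 0 ≤ e.1 ∧ e.1 < e.2 ∧ e.2 ≤ n - 1 := by
    intro e he
    obtain ⟨s, hs, rfl⟩ := Finset.mem_image.1 he
    induction s using Sym2.ind with
    | _ a b =>
      have hadj : G.Adj a b := by rwa [SimpleGraph.mem_edgeFinset, SimpleGraph.mem_edgeSet] at hs
      have hne : σ a ≠ σ b := fun h => hadj.ne (hbij.1 h)
      have hne' : (σ a).val ≠ (σ b).val := fun h => hne (Fin.ext h)
      have := hσlt a; have := hσlt b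
      simp only [hf, Sym2.lift_mk]
      omega
  have hncE : ∀ e ∈ E, ∀ g ∈ E, ¬(e.1 < g.1 ∧ g.1 < e.2 ∧ e.2 < g.2) := by
    intro e he g hg hcross
    obtain ⟨s, hs, rfl⟩ := Finset.mem_image.1 he
    obtain ⟨t, ht, rfl⟩ := Finset.mem_image.1 hg
    induction s using Sym2.ind with
    | _ a b =>
      induction t using Sym2.ind with
      | _ c d =>
        have hab : G.Adj a b := by rwa [SimpleGraph.mem_edgeFinset, SimpleGraph.mem_edgeSet] at hs
        have hcd : G.Adj c d := by rwa [SimpleGraph.mem_edgeFinset, SimpleGraph.mem_edgeSet] at ht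
        simp only [hf, Sym2.lift_mk] at hcross
        -- orient
        rcases le_total (σ a).val (σ b).val with h1 | h1 <;>
        rcases le_total (σ c).val (σ d).val with h2 | h2
        · exact hnc a b c d hab hcd ⟨Fin.lt_def.mpr (by omega), Fin.lt_def.mpr (by omega),
            Fin.lt_def.mpr (by omega)⟩
        · exact hnc a b d c hab hcd.symm ⟨Fin.lt_def.mpr (by omega), Fin.lt_def.mpr (by omega),
            Fin.lt_def.mpr (by omega)⟩
        · exact hnc b a c d hab.symm hcd ⟨Fin.lt_def.mpr (by omega), Fin.lt_def.mpr (by omega),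
            Fin.lt_def.mpr (by omega)⟩
        · exact hnc b a d c hab.symm hcd.symm ⟨Fin.lt_def.mpr (by omega), Fin.lt_def.mpr (by omega),
            Fin.lt_def.mpr (by omega)⟩
  have := noncross_bound (n - 1) 0 (n - 1) (by omega) E hbound hncE
  have hfin : Nat.card G.edgeSet = G.edgeFinset.card := by
    rw [Nat.card_eq_fintype_card, SimpleGraph.edgeFinset_card]
  omega

def snake (n : ℕ) : SimpleGraph (Fin n) where
  Adj i j := i.val + 1 = j.val ∨ j.val + 1 = i.val ∨ i.val + 2 = j.val ∨ j.val + 2 = i.val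
  symm := by constructor; intro i j h; tauto
  loopless := by constructor; intro i h; omega

instance (n : ℕ) : DecidableRel (snake n).Adj :=
  fun _ _ => inferInstanceAs (Decidable (_ ∨ _ ∨ _ ∨ _))

lemma snake_edge_card {n : ℕ} (hn : 5 ≤ n) :
    Nat.card (snake n).edgeSet = 2 * n - 3 := by
  classical
  have hn0 : 0 < n := by omega
  set c : ℕ → Fin n := fun i => ⟨i % n, Nat.mod_lt _ hn0⟩ with hc
  have hcval : ∀ i, i < n → (c i).val = i := fun i hi => Nat.mod_eq_of_lt hi
  set A : Finset (Sym2 (Fin n)) := (Finset.range (n-1)).image (fun i => s(c i, c (i+1))) with hA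
  set B : Finset (Sym2 (Fin n)) := (Finset.range (n-2)).image (fun i => s(c i, c (i+2))) with hB
  have hEq : (snake n).edgeFinset = A ∪ B := by
    ext e
    induction e using Sym2.ind with
    | _ a b =>
      simp only [SimpleGraph.mem_edgeFinset, SimpleGraph.mem_edgeSet, Finset.mem_union,
        hA, hB, Finset.mem_image, Finset.mem_range]
      constructor
      · intro h
        rcases h with h | h | h | h
        · exact Or.inl ⟨a.val, by omega, by
            rw [Sym2.eq_iff]; left
            constructor <;> apply Fin.ext <;> rw [hcval _ (by omega)] <;> omega⟩
        · exact Or.inl ⟨b.val, by omega, by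
            rw [Sym2.eq_iff]; right
            constructor <;> apply Fin.ext <;> rw [hcval _ (by omega)] <;> omega⟩
        · exact Or.inr ⟨a.val, by omega, by
            rw [Sym2.eq_iff]; left
            constructor <;> apply Fin.ext <;> rw [hcval _ (by omega)] <;> omega⟩
        · exact Or.inr ⟨b.val, by omega, by
            rw [Sym2.eq_iff]; right
            constructor <;> apply Fin.ext <;> rw [hcval _ (by omega)] <;> omega⟩
      · intro h
        show (snake n).Adj a b
        rcases h with ⟨i, hi, he⟩ | ⟨i, hi, he⟩ <;>
          rw [Sym2.eq_iff] at he <;>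
          rcases he with ⟨h1, h2⟩ | ⟨h1, h2⟩ <;>
          · have e1 := congrArg Fin.val h1
            have e2 := congrArg Fin.val h2
            rw [hcval _ (by omega)] at e1
            rw [hcval _ (by omega)] at e2
            show _ ∨ _ ∨ _ ∨ _
            omega
  have hAcard : A.card = n - 1 := by
    rw [hA, Finset.card_image_of_injOn, Finset.card_range]
    intro i hi j hj h
    simp only [Finset.mem_coe, Finset.mem_range] at hi hj
    rw [Sym2.eq_iff] at h
    rcases h with ⟨h1, h2⟩ | ⟨h1, h2⟩ <;>
    · have e1 := congrArg Fin.val h1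
      rw [hcval _ (by omega), hcval _ (by omega)] at e1
      have e2 := congrArg Fin.val h2
      rw [hcval _ (by omega), hcval _ (by omega)] at e2
      omega
  have hBcard : B.card = n - 2 := by
    rw [hB, Finset.card_image_of_injOn, Finset.card_range]
    intro i hi j hj h
    simp only [Finset.mem_coe, Finset.mem_range] at hi hj
    rw [Sym2.eq_iff] at h
    rcases h with ⟨h1, h2⟩ | ⟨h1, h2⟩ <;>
    · have e1 := congrArg Fin.val h1
      rw [hcval _ (by omega), hcval _ (by omega)] at e1
      have e2 := congrArg Fin.val h2
      rw [hcval _ (by omega), hcval _ (by omega)] at e2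
      omega
  have hdisj : Disjoint A B := by
    rw [Finset.disjoint_left]
    intro e heA heB
    rw [hA, Finset.mem_image] at heA
    rw [hB, Finset.mem_image] at heB
    obtain ⟨i, hi, rfl⟩ := heA
    obtain ⟨j, hj, he⟩ := heB
    simp only [Finset.mem_range] at hi hj
    rw [Sym2.eq_iff] at he
    rcases he with ⟨h1, h2⟩ | ⟨h1, h2⟩ <;>
    · have e1 := congrArg Fin.val h1
      rw [hcval _ (by omega), hcval _ (by omega)] at e1
      have e2 := congrArg Fin.val h2
      rw [hcval _ (by omega), hcval _ (by omega)] at e2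
      omega
  have : Nat.card (snake n).edgeSet = (snake n).edgeFinset.card := by
    rw [Nat.card_eq_fintype_card, SimpleGraph.edgeFinset_card]
  rw [this, hEq, Finset.card_union_of_disjoint hdisj, hAcard, hBcard]
  omega

lemma snake_outerplanar {n : ℕ} (hn : 2 ≤ n) : IsOuterplanar (snake n) := by
  have hcardV : Nat.card (Fin n) = n := by simp
  set p : ℕ → ℕ := fun v => if v % 2 = 0 then v / 2 else n - 1 - v / 2 with hp
  have hplt : ∀ v, v < n → p v < n := by
    intro v hv; rw [hp]; dsimp only; split <;> omega
  set σ : Fin n → Fin (Nat.card (Fin n)) :=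
    fun v => ⟨p v.val, by rw [hcardV]; exact hplt _ v.isLt⟩ with hσ
  refine ⟨σ, ?_, ?_⟩
  · rw [Fintype.bijective_iff_injective_and_card]
    constructor
    · intro u v h
      have h' : p u.val = p v.val := congrArg Fin.val h
      rw [hp] at h'
      dsimp only at h'
      have hu := u.isLt
      have hv := v.isLt
      apply Fin.ext
      split at h' <;> split at h' <;> omega
    · simp
  · intro a b c d hab hcd hcross
    obtain ⟨h1, h2, h3⟩ := hcross
    rw [Fin.lt_def] at h1 h2 h3
    have h1 : p a.val < p c.val := h1
    have h2 : p c.val < p b.val := h2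
    have h3 : p b.val < p d.val := h3
    -- interval structure: for each snake edge {u,v} with pu < pv:
    -- pv = pu + 1 ∨ pu + pv = n - 1 ∨ pu + pv = n
    have key : ∀ u v : Fin n, (snake n).Adj u v →
        (max (p u.val) (p v.val) = min (p u.val) (p v.val) + 1 ∨
         p u.val + p v.val = n - 1 ∨ p u.val + p v.val = n) := by
      intro u v huv
      have huv : u.val + 1 = v.val ∨ v.val + 1 = u.val ∨ u.val + 2 = v.val ∨ v.val + 2 = u.val := huv
      have hu := u.isLt
      have hv := v.isLt
      rw [hp]; dsimp only
      split <;> split <;> omega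
    have k1 := key a b hab
    have k2 := key c d hcd
    omega

def nbrs (x : ℕ) : Finset ℕ := {x-2, x-1, x+1, x+2}

lemma nbrs_card_le (x : ℕ) : (nbrs x).card ≤ 4 := by
  have h1 := Finset.card_insert_le (x-2) ({x-1,x+1,x+2} : Finset ℕ)
  have h2 := Finset.card_insert_le (x-1) ({x+1,x+2} : Finset ℕ)
  have h3 := Finset.card_insert_le (x+1) ({x+2} : Finset ℕ)
  have h4 : ({x+2} : Finset ℕ).card = 1 := Finset.card_singleton _
  show (insert (x-2) ({x-1,x+1,x+2} : Finset ℕ)).card ≤ 4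
  omega

lemma snake_mem_nbrs {n : ℕ} (x v : Fin n) (h : (snake n).Adj x v) : v.val ∈ nbrs x.val := by
  have h' : x.val + 1 = v.val ∨ v.val + 1 = x.val ∨ x.val + 2 = v.val ∨ v.val + 2 = x.val := h
  simp only [nbrs, Finset.mem_insert, Finset.mem_singleton]
  omega

lemma snake_aux33 {n : ℕ} (x y : Fin n) (X Y : Finset (Fin n))
    (hadj : (snake n).Adj x y) (hX3 : X.card = 3) (hY3 : Y.card = 3)
    (hdisj : Disjoint X Y) (hyX : y ∉ X) (hxY : x ∉ Y)
    (hXadj : ∀ v ∈ X, (snake n).Adj x v) (hYadj : ∀ v ∈ Y, (snake n).Adj y v)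
    (hxy : x.val < y.val) : False := by
  classical
  have himg : ∀ (z w : Fin n) (Z : Finset (Fin n)), w ∉ Z → Z.card = 3 →
      (∀ v ∈ Z, (snake n).Adj z v) → (snake n).Adj z w →
      (insert w Z).image Fin.val = nbrs z.val ∧ 2 ≤ z.val := by
    intro z w Z hwZ hZ3 hZadj hzw
    have hsub : (insert w Z).image Fin.val ⊆ nbrs z.val := by
      intro m hm
      obtain ⟨u, hu, rfl⟩ := Finset.mem_image.1 hm
      rcases Finset.mem_insert.1 hu with rfl | hu
      · exact snake_mem_nbrs z u hzw
      · exact snake_mem_nbrs z u (hZadj u hu)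
    have hcard4 : ((insert w Z).image Fin.val).card = 4 := by
      rw [Finset.card_image_of_injective _ Fin.val_injective,
        Finset.card_insert_of_notMem hwZ, hZ3]
    have heq : (insert w Z).image Fin.val = nbrs z.val :=
      Finset.eq_of_subset_of_card_le hsub (by rw [hcard4]; exact nbrs_card_le _)
    refine ⟨heq, ?_⟩
    by_contra hz2
    push_neg at hz2
    have hdup : z.val - 2 = z.val - 1 := by omega
    have hle3 : (nbrs z.val).card ≤ 3 := by
      show (insert (z.val-2) ({z.val-1,z.val+1,z.val+2} : Finset ℕ)).card ≤ 3
      rw [hdup, Finset.insert_idem]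
      have h2 := Finset.card_insert_le (z.val-1) ({z.val+1,z.val+2} : Finset ℕ)
      have h3 := Finset.card_insert_le (z.val+1) ({z.val+2} : Finset ℕ)
      have h4 : ({z.val+2} : Finset ℕ).card = 1 := Finset.card_singleton _
      omega
    rw [← heq, hcard4] at hle3
    omega
  obtain ⟨hXeq, hx2⟩ := himg x y X hyX hX3 hXadj hadj
  obtain ⟨hYeq, _⟩ := himg y x Y hxY hY3 hYadj hadj.symm
  have hadj' : x.val + 1 = y.val ∨ y.val + 1 = x.val ∨ x.val + 2 = y.val ∨ y.val + 2 = x.val := hadj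
  have hy12 : y.val = x.val + 1 ∨ y.val = x.val + 2 := by omega
  obtain ⟨m, hm1, hm2, hmx, hmy⟩ : ∃ m, m ∈ nbrs x.val ∧ m ∈ nbrs y.val ∧
      m ≠ x.val ∧ m ≠ y.val := by
    rcases hy12 with h | h
    · refine ⟨x.val - 1, by simp [nbrs], ?_, by omega, by omega⟩
      have he : x.val - 1 = y.val - 2 := by omega
      rw [he]; simp [nbrs]
    · refine ⟨x.val + 1, by simp [nbrs], ?_, by omega, by omega⟩
      have he : x.val + 1 = y.val - 1 := by omega
      rw [he]; simp [nbrs]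
  rw [← hXeq] at hm1
  rw [← hYeq] at hm2
  obtain ⟨u, hu, hum⟩ := Finset.mem_image.1 hm1
  obtain ⟨w, hw, hwm⟩ := Finset.mem_image.1 hm2
  have hu' : u ∈ X := by
    rcases Finset.mem_insert.1 hu with rfl | h
    · exact absurd hum.symm hmy
    · exact h
  have hw' : w ∈ Y := by
    rcases Finset.mem_insert.1 hw with rfl | h
    · exact absurd hwm.symm hmx
    · exact h
  have huw : u = w := Fin.ext (hum.trans hwm.symm)
  exact Finset.disjoint_left.1 hdisj hu' (huw ▸ hw')

lemma snake_free {n p q : ℕ} (hp : 2 ≤ p) (hpq : p ≤ q) (h4 : 3 ≤ p ∨ 4 ≤ q) :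
    ¬ ContainsDoubleStar (snake n) p q := by
  classical
  rintro ⟨x, y, X, Y, hadj, hXc, hYc, hdisj, hyX, hxY, hXadj, hYadj⟩
  by_cases hq4 : 4 ≤ q
  · have hsub : (insert x Y).image Fin.val ⊆ nbrs y.val := by
      intro m hm
      obtain ⟨u, hu, rfl⟩ := Finset.mem_image.1 hm
      rcases Finset.mem_insert.1 hu with rfl | hu
      · exact snake_mem_nbrs y u hadj.symm
      · exact snake_mem_nbrs y u (hYadj u hu)
    have hcard : ((insert x Y).image Fin.val).card = q + 1 := by
      rw [Finset.card_image_of_injective _ Fin.val_injective,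
        Finset.card_insert_of_notMem hxY, hYc]
    have := Finset.card_le_card hsub
    have := nbrs_card_le y.val
    omega
  · have hp3 : p = 3 := by omega
    have hq3 : q = 3 := by omega
    subst hp3; subst hq3
    have hadj' : x.val + 1 = y.val ∨ y.val + 1 = x.val ∨ x.val + 2 = y.val ∨ y.val + 2 = x.val := hadj
    have hne : x.val ≠ y.val := by omega
    rcases lt_or_gt_of_ne hne with h | h
    · exact snake_aux33 x y X Y hadj hXc hYc hdisj hyX hxY hXadj hYadj h
    · exact snake_aux33 y x Y X hadj.symm hYc hXc hdisj.symm hxY hyX hYadj hXadj h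

theorem stmt13 (p q n : ℕ) (hp : 2 ≤ p) (hpq : p ≤ q) (hpq4 : 3 ≤ p ∨ 4 ≤ q)
    (hn : p + q + 2 ≤ n) :
    IsGreatest {m : ℕ | ∃ G : SimpleGraph (Fin n), IsOuterplanar G ∧
      ¬ ContainsDoubleStar G p q ∧ Nat.card G.edgeSet = m} (2 * n - 3) := by
  constructor
  · exact ⟨snake n, snake_outerplanar (by omega), snake_free hp hpq hpq4,
      snake_edge_card (by omega)⟩
  · rintro m ⟨G, hop, -, rfl⟩
    exact outerplanar_card_le G hop
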